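/- If S is a nearly Gorenstein numerical semigroup with NG-vector (f_1, ..., f_ν), then there exist two distinct indices i ≠ j with f_i = f_j. Moreover, if f_1, ..., f_{ν-1} are pairwise distinct, then PF(S) = {f_1, ..., f_{ν-1}} and the type of S equals ν - 1. -/
import Mathlib


/-- A numerical semigroup: a subset of ℕ containing 0, closed under addition,
with finite complement. -/
def IsNumSgp (S : Set ℕ) : Prop :=
  0 ∈ S ∧ (∀ a ∈ S, ∀ b ∈ S, a + b ∈ S) ∧ (Sᶜ : Set ℕ).Finite

/-- An integer belongs to (the image in ℤ of) S. -/
def memZ (S : Set ℕ) (z : ℤ) : Prop := ∃ s ∈ S, (s : ℤ) = z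

/-- F is the Frobenius number of S: the largest natural number not in S. -/
def IsFrob (S : Set ℕ) (F : ℕ) : Prop := F ∉ S ∧ ∀ n, F < n → n ∈ S

/-- The set of pseudo-Frobenius numbers of S. -/
def PF (S : Set ℕ) : Set ℕ := {f | f ∉ S ∧ ∀ s ∈ S, s ≠ 0 → f + s ∈ S}

/-- n is a minimal generator of S. -/
def IsMinGen (S : Set ℕ) (n : ℕ) : Prop :=
  n ∈ S ∧ n ≠ 0 ∧ ¬∃ a ∈ S, ∃ b ∈ S, a ≠ 0 ∧ b ≠ 0 ∧ a + b = n

/-- S is almost symmetric (Nari): F - f ∈ PF(S) for every f ∈ PF(S). -/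
def AlmostSym (S : Set ℕ) (F : ℕ) : Prop :=
  ∀ f ∈ PF S, ∃ g ∈ PF S, (g : ℤ) = (F : ℤ) - (f : ℤ)

/-- S is symmetric: PF(S) = {F(S)} (vacuously true when S = ℕ). -/
def IsSym (S : Set ℕ) : Prop := ∀ F, IsFrob S F → PF S = {F}

/-- (f_1,...,f_ν) is an NG-vector for S with minimal generators n_1,...,n_ν. -/
def IsNGVector {ν : ℕ} (S : Set ℕ) (n f : Fin ν → ℕ) : Prop :=
  ∀ i, f i ∈ PF S ∧ ∀ g ∈ PF S, memZ S ((n i : ℤ) + (f i : ℤ) - (g : ℤ))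

/-- S is nearly Gorenstein (generator criterion): for each minimal generator m
there is f ∈ PF(S) with m + f - g ∈ S for all g ∈ PF(S). -/
def NearlyGGen (S : Set ℕ) : Prop :=
  ∀ m, IsMinGen S m → ∃ f ∈ PF S, ∀ g ∈ PF S, memZ S ((m : ℤ) + (f : ℤ) - (g : ℤ))

/-- The canonical ideal K(S) = {z ∈ ℤ : F - z ∉ S}. -/
def Kan (S : Set ℕ) (F : ℕ) : Set ℤ := {z | ¬ memZ S ((F : ℤ) - z)}

/-- The relative ideal (S - K(S)) = {z ∈ ℤ : z + K(S) ⊆ S}. -/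
def SmK (S : Set ℕ) (F : ℕ) : Set ℤ := {z | ∀ k ∈ Kan S F, memZ S (z + k)}

/-- S is nearly Gorenstein: M(S) ⊆ K(S) + (S - K(S)). -/
def NearlyG (S : Set ℕ) (F : ℕ) : Prop :=
  ∀ m ∈ S, m ≠ 0 → ∃ k ∈ Kan S F, ∃ x ∈ SmK S F, k + x = (m : ℤ)

/-- Every nonzero element of S decomposes as a minimal generator plus an element of S. -/
lemma ng_decomp {ν : ℕ} (S : Set ℕ) (n : Fin ν → ℕ) (hS : IsNumSgp S)
    (hgen : ∀ m, IsMinGen S m ↔ ∃ i, n i = m) :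
    ∀ s, s ∈ S → s ≠ 0 → ∃ (i : Fin ν) (t : ℕ), t ∈ S ∧ s = n i + t := by
  intro s
  induction s using Nat.strong_induction_on with
  | _ s IH =>
    intro hs hs0
    by_cases hm : IsMinGen S s
    · obtain ⟨i, hi⟩ := (hgen s).1 hm
      exact ⟨i, 0, hS.1, by omega⟩
    · have hE : ∃ a ∈ S, ∃ b ∈ S, a ≠ 0 ∧ b ≠ 0 ∧ a + b = s := by
        by_contra hno
        exact hm ⟨hs, hs0, hno⟩
      obtain ⟨a, ha, b, hb, ha0, hb0, hab⟩ := hE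
      obtain ⟨i, t, ht, hat⟩ := IH a (by omega) ha ha0
      exact ⟨i, t + b, hS.2.1 t ht b hb, by omega⟩

/-- Multiples of an element of S lie in S. -/
lemma ng_mult (S : Set ℕ) (hS : IsNumSgp S) (x : ℕ) (hx : x ∈ S) :
    ∀ k, k * x ∈ S := by
  intro k
  induction k with
  | zero => simpa using hS.1
  | succ k ih =>
    have := hS.2.1 (k * x) ih x hx
    simpa [Nat.succ_mul] using this

/-- An element of S all of whose decompositions avoid the first ν-1 generators
is a multiple of the last generator. -/
lemma ng_pure {ν : ℕ} (hν : 2 ≤ ν) (S : Set ℕ) (n : Fin ν → ℕ) (hS : IsNumSgp S)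
    (hgen : ∀ m, IsMinGen S m ↔ ∃ i, n i = m) :
    ∀ z, z ∈ S → (∀ l : Fin ν, (l : ℕ) < ν - 1 → ∀ s ∈ S, z ≠ n l + s) →
      ∃ m, z = m * n ⟨ν - 1, by omega⟩ := by
  intro z
  induction z using Nat.strong_induction_on with
  | _ z IH =>
    intro hz havoid
    by_cases hz0 : z = 0
    · exact ⟨0, by simp [hz0]⟩
    · obtain ⟨j, t, ht, hjt⟩ := ng_decomp S n hS hgen z hz hz0
      have hjlt := j.isLt
      have hj : (j : ℕ) = ν - 1 := by
        by_contra hne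
        exact havoid j (by omega) t ht hjt
      have hjL : j = ⟨ν - 1, by omega⟩ := Fin.ext hj
      have hnj0 : n j ≠ 0 := ((hgen (n j)).2 ⟨j, rfl⟩).2.1
      have ht' : ∀ l : Fin ν, (l : ℕ) < ν - 1 → ∀ s ∈ S, t ≠ n l + s := by
        intro l hl s hs heq
        exact havoid l hl (s + n j) (hS.2.1 s hs (n j) ((hgen (n j)).2 ⟨j, rfl⟩).1) (by omega)
      obtain ⟨m, hm⟩ := IH t (by omega) ht ht'
      refine ⟨m + 1, ?_⟩
      rw [hjt, hm, hjL]
      ring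

theorem stmt11 (ν : ℕ) (hν : 2 ≤ ν) (S : Set ℕ) (F : ℕ) (n f : Fin ν → ℕ)
    (hS : IsNumSgp S) (hF : IsFrob S F) (hmono : StrictMono n)
    (hgen : ∀ m, IsMinGen S m ↔ ∃ i, n i = m)
    (hNG : IsNGVector S n f) :
    (∃ i j : Fin ν, i ≠ j ∧ f i = f j) ∧
    ((∀ j k : Fin ν, (j : ℕ) < ν - 1 → (k : ℕ) < ν - 1 → j ≠ k → f j ≠ f k) →
      PF S = {g : ℕ | ∃ j : Fin ν, (j : ℕ) < ν - 1 ∧ f j = g} ∧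
      (PF S).ncard = ν - 1) := by
  set i0 : Fin ν := ⟨0, by omega⟩ with hi0def
  have hi0v : (i0 : ℕ) = 0 := by rw [hi0def]
  -- basic facts
  have hnmem : ∀ i : Fin ν, n i ∈ S := fun i => ((hgen (n i)).2 ⟨i, rfl⟩).1
  have hnne : ∀ i : Fin ν, n i ≠ 0 := fun i => ((hgen (n i)).2 ⟨i, rfl⟩).2.1
  have hfPF : ∀ i : Fin ν, f i ∈ PF S := fun i => (hNG i).1
  have hfnotS : ∀ i : Fin ν, f i ∉ S := fun i => (hfPF i).1
  have hfadd : ∀ i : Fin ν, ∀ s ∈ S, s ≠ 0 → f i + s ∈ S := fun i => (hfPF i).2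
  have hFPF : F ∈ PF S := ⟨hF.1, fun s _ hs0 => hF.2 (F + s) (by omega)⟩
  have hle : ∀ g ∈ PF S, g ≤ F := by
    intro g hg
    by_contra hlt
    exact hg.1 (hF.2 g (by omega))
  have hminS : ∀ s ∈ S, s ≠ 0 → n i0 ≤ s := by
    intro s hs hs0
    obtain ⟨j, t, _, hjt⟩ := ng_decomp S n hS hgen s hs hs0
    have : n i0 ≤ n j := hmono.monotone (by rw [Fin.le_def, hi0v]; exact Nat.zero_le _)
    omega
  -- f i0 = F
  have hf0 : f i0 = F := by
    obtain ⟨z, hzS, hz⟩ := (hNG i0).2 F hFPF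
    have hfle := hle (f i0) (hfPF i0)
    have hz0 : z ≠ 0 := by
      intro h0
      subst h0
      have hFeq : F = f i0 + n i0 := by push_cast at hz; omega
      exact hF.1 (hFeq ▸ hfadd i0 (n i0) (hnmem i0) (hnne i0))
    have hzge := hminS z hzS hz0
    omega
  -- the last index
  have hLlt : ν - 1 < ν := by omega
  set Lst : Fin ν := ⟨ν - 1, hLlt⟩ with hLst
  have hLstv : (Lst : ℕ) = ν - 1 := by rw [hLst]
  -- Part 2 core, under distinctness of the head
  have core : ∀ (hd : ∀ j k : Fin ν, (j : ℕ) < ν - 1 → (k : ℕ) < ν - 1 → j ≠ k → f j ≠ f k),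
      PF S = {g : ℕ | ∃ j : Fin ν, (j : ℕ) < ν - 1 ∧ f j = g} := by
    intro hd
    -- Step 1: f i = F + n i0 - n i for all i with val < ν - 1
    have step1 : ∀ m : ℕ, ∀ i : Fin ν, (i : ℕ) = m → (i : ℕ) < ν - 1 →
        (f i : ℤ) = (F : ℤ) + (n i0 : ℤ) - (n i : ℤ) := by
      intro m
      induction m using Nat.strong_induction_on with
      | _ m IH =>
        intro i him hiv
        by_cases hm0 : m = 0
        · have : i = i0 := Fin.ext (by omega)
          rw [this, hf0]
          ring
        · obtain ⟨z, hzS, hz⟩ := (hNG i0).2 (f i) (hfPF i)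
          rw [hf0] at hz
          have hfile := hle (f i) (hfPF i)
          have hn00 : n i0 ≠ 0 := hnne i0
          have hz0 : z ≠ 0 := by
            intro h0
            subst h0
            push_cast at hz
            omega
          obtain ⟨j, t, htS, hjt⟩ := ng_decomp S n hS hgen z hzS hz0
          have hjm : ¬ ((j : ℕ) < m) := by
            intro hjm
            have hjv : (j : ℕ) < ν - 1 := by omega
            have hfj := IH (j : ℕ) hjm j rfl hjv
            by_cases ht0 : t = 0
            · have hji : j ≠ i := by
                intro h
                rw [h] at hjm
                omega
              refine hd j i hjv hiv hji ?_
              have : (n j : ℤ) = (F : ℤ) + (n i0 : ℤ) - (f i : ℤ) := by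
                rw [hjt, ht0] at hz
                push_cast at hz ⊢
                omega
              push_cast at hfj
              omega
            · have hfit : f i + t ∈ S := hfadd i t htS ht0
              have : f i + t = f j := by
                have hzc : (z : ℤ) = (n j : ℤ) + (t : ℤ) := by exact_mod_cast hjt
                push_cast at hfj ⊢
                omega
              exact (hfnotS j) (this ▸ hfit)
          have hij : i ≤ j := by
            rw [Fin.le_def]
            omega
          have hnij : n i ≤ n j := hmono.monotone hij
          obtain ⟨w, hwS, hw⟩ := (hNG i).2 F hFPF
          have hw0 : w ≠ 0 := by
            intro h0
            subst h0
            have hFeq : F = f i + n i := by push_cast at hw; omega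
            exact hF.1 (hFeq ▸ hfadd i (n i) (hnmem i) (hnne i))
          have hwge := hminS w hwS hw0
          -- z ≥ n i and z + w = n i0 + n i forces z = n i
          have hzge : n i ≤ z := by omega
          push_cast at hz hw ⊢
          omega
    -- rogue element argument
    ext h
    constructor
    · intro hh
      by_contra hro
      simp only [Set.mem_setOf_eq, not_exists, not_and] at hro
      obtain ⟨z, hzS, hz⟩ := (hNG i0).2 h hh
      rw [hf0] at hz
      have hhle := hle h hh
      have hn00 : n i0 ≠ 0 := hnne i0
      have hz0 : z ≠ 0 := by
        intro h0
        subst h0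
        push_cast at hz
        omega
      have havoid : ∀ l : Fin ν, (l : ℕ) < ν - 1 → ∀ s ∈ S, z ≠ n l + s := by
        intro l hl s hsS heq
        have hfl := step1 (l : ℕ) l rfl hl
        by_cases hs0 : s = 0
        · refine hro l hl ?_
          have hzc : (z : ℤ) = (n l : ℤ) + (s : ℤ) := by exact_mod_cast heq
          push_cast at hfl hzc hz ⊢
          omega
        · have hhs : h + s ∈ S := hh.2 s hsS hs0
          have : h + s = f l := by
            have hzc : (z : ℤ) = (n l : ℤ) + (s : ℤ) := by exact_mod_cast heq
            push_cast at hfl ⊢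
            omega
          exact (hfnotS l) (this ▸ hhs)
      obtain ⟨c, hc⟩ := ng_pure hν S n hS hgen z hzS havoid
      have hσS : F + n i0 ∈ S := hF.2 (F + n i0) (by omega)
      have hσavoid : ∀ l : Fin ν, (l : ℕ) < ν - 1 → ∀ s ∈ S, F + n i0 ≠ n l + s := by
        intro l hl s hsS heq
        have hfl := step1 (l : ℕ) l rfl hl
        have : s = f l := by push_cast at hfl; omega
        exact (hfnotS l) (this ▸ hsS)
      obtain ⟨m, hm⟩ := ng_pure hν S n hS hgen (F + n i0) hσS hσavoid
      -- h + z = F + n i0, so h = (m - c) * n Lst ∈ S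
      have hsum : h + z = F + n i0 := by push_cast at hz ⊢; omega
      have hNL : n (⟨ν - 1, by omega⟩ : Fin ν) ∈ S := hnmem _
      set NL := n (⟨ν - 1, by omega⟩ : Fin ν) with hNLdef
      have hcm : c * NL ≤ m * NL := by omega
      have hcmle : c ≤ m := by
        by_contra hgt
        have : m * NL ≤ c * NL := Nat.mul_le_mul_right NL (by omega)
        have hNL0 : NL ≠ 0 := hnne _
        have hh0 : h ≠ 0 := fun h0 => hh.1 (h0 ▸ hS.1)
        omega
      have hheq : h = (m - c) * NL := by
        rw [Nat.sub_mul]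
        omega
      exact hh.1 (hheq ▸ ng_mult S hS NL hNL (m - c))
    · rintro ⟨j, hjv, rfl⟩
      exact hfPF j
  -- assemble the two parts
  constructor
  · by_cases hd : ∀ j k : Fin ν, (j : ℕ) < ν - 1 → (k : ℕ) < ν - 1 → j ≠ k → f j ≠ f k
    · have hset := core hd
      have hL : f Lst ∈ PF S := hfPF Lst
      rw [hset] at hL
      obtain ⟨j, hjv, hjf⟩ := hL
      refine ⟨j, Lst, ?_, hjf⟩
      intro heq
      rw [hLst] at heq
      have := congrArg Fin.val heq
      simp at this
      omega
    · push_neg at hd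
      obtain ⟨j, k, _, _, hjk, hfe⟩ := hd
      exact ⟨j, k, hjk, by omega⟩
  · intro hd
    refine ⟨core hd, ?_⟩
    rw [core hd]
    have hsetF : {g : ℕ | ∃ j : Fin ν, (j : ℕ) < ν - 1 ∧ f j = g} =
        ↑((Finset.univ.filter (fun j : Fin ν => (j : ℕ) < ν - 1)).image f) := by
      ext g
      simp [Finset.mem_image, Finset.mem_filter]
    rw [hsetF, Set.ncard_coe_finset]
    rw [Finset.card_image_of_injOn]
    · apply Finset.card_eq_of_bijective (fun i hi => ⟨i, by omega⟩)
      · intro a ha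
        simp only [Finset.mem_filter, Finset.mem_univ, true_and] at ha
        exact ⟨(a : ℕ), ha, Fin.ext rfl⟩
      · intro i hi
        simp only [Finset.mem_filter, Finset.mem_univ, true_and]
        exact hi
      · intro i j hi hj heq
        exact congrArg Fin.val heq
    · intro x hx y hy hxy
      simp only [Finset.coe_filter, Set.mem_setOf_eq, Finset.mem_coe, Finset.mem_univ,
        true_and] at hx hy
      by_contra hne
      exact hd x y hx hy hne hxy
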